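/- Solution of the Bellman equation for the (d,k)-runlength-limited input-constrained BEC (core of Theorem 9): Fix integers 0 ≤ d < k < ∞ and ε ∈ [0,1], and define ρ_ε := (1−ε) · max over (a_d, …, a_{k−1}) ∈ [0,1]^{k−d} of [ Σ_{i=d}^{k−1} h_b(a_i) · Π_{j=d}^{i−1} (1−a_j) ] / [ d + 1 + Σ_{i=d}^{k−1} Π_{j=d}^{i} (1−a_j) ], where an empty product equals 1. Then there exists a function h : {0, 1, …, k} → ℝ such that (i) ρ_ε + h(i) = h(i+1) for all 0 ≤ i ≤ d−1, (ii) ρ_ε + h(i) = max_{a ∈ [0,1]} [ (1−ε)·h_b(a) + (1−a)·h(i+1) + a·h(0) ] for all d ≤ i ≤ k−1, and (iii) ρ_ε = h(0) − h(k). -/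

import Mathlib

open Finset

/-- The binary entropy function (base 2); the convention `0 · log₂ 0 = 0` is
automatic since `Real.logb 2 0 = 0`. -/
noncomputable def binEnt (x : ℝ) : ℝ :=
  -(x * Real.logb 2 x) - (1 - x) * Real.logb 2 (1 - x)

lemma continuous_binEnt : Continuous binEnt := by
  have h : binEnt = fun x => Real.binEntropy x / Real.log 2 := by
    funext x
    simp only [binEnt, Real.binEntropy, Real.logb, Real.log_inv]
    ring
  rw [h]; exact Real.binEntropy_continuous.div_const _

noncomputable def Fmax (c x : ℝ) : ℝ :=
  sSup ((fun a => c * binEnt a + (1 - a) * x) '' Set.Icc 0 1)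

lemma Fmax_isGreatest (c x : ℝ) :
    IsGreatest ((fun a : ℝ => c * binEnt a + (1 - a) * x) '' Set.Icc 0 1) (Fmax c x) := by
  obtain ⟨b, hb, hmax⟩ := IsCompact.exists_isMaxOn (isCompact_Icc (a := (0:ℝ)) (b := 1))
    (Set.nonempty_Icc.2 zero_le_one)
    (Continuous.continuousOn (f := fun a : ℝ => c * binEnt a + (1 - a) * x)
      (by exact ((continuous_const.mul continuous_binEnt).add
        ((continuous_const.sub continuous_id).mul continuous_const))))
  have hg : IsGreatest ((fun a : ℝ => c * binEnt a + (1 - a) * x) '' Set.Icc 0 1)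
      (c * binEnt b + (1 - b) * x) := by
    constructor
    · exact ⟨b, hb, rfl⟩
    · rintro y ⟨a, ha, rfl⟩; exact hmax ha
  have : Fmax c x = c * binEnt b + (1 - b) * x := hg.csSup_eq
  rw [this]; exact hg

noncomputable def Nv (k : ℕ) (a : ℕ → ℝ) (i : ℕ) : ℝ :=
  ∑ l ∈ Finset.Ico i k, binEnt (a l) * ∏ j ∈ Finset.Ico i l, (1 - a j)

noncomputable def Dv (k : ℕ) (a : ℕ → ℝ) (i : ℕ) : ℝ :=
  1 + ∑ l ∈ Finset.Ico i k, ∏ j ∈ Finset.Ico i (l + 1), (1 - a j)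

lemma Nv_rec (k : ℕ) (a : ℕ → ℝ) {i : ℕ} (h : i < k) :
    Nv k a i = binEnt (a i) + (1 - a i) * Nv k a (i + 1) := by
  unfold Nv
  rw [Finset.sum_eq_sum_Ico_succ_bot h]
  simp only [Finset.Ico_self, Finset.prod_empty, mul_one]
  congr 1
  rw [Finset.mul_sum]
  refine Finset.sum_congr rfl fun l hl => ?_
  rw [Finset.prod_eq_prod_Ico_succ_bot (lt_of_lt_of_le (Nat.lt_succ_self i)
    (Finset.mem_Ico.1 hl).1)]
  ring

lemma Nv_top (k : ℕ) (a : ℕ → ℝ) : Nv k a k = 0 := by simp [Nv]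

lemma Dv_rec (k : ℕ) (a : ℕ → ℝ) {i : ℕ} (h : i < k) :
    Dv k a i = 1 + (1 - a i) * Dv k a (i + 1) := by
  unfold Dv
  rw [Finset.sum_eq_sum_Ico_succ_bot h]
  have e0 : ∏ j ∈ Finset.Ico i (i + 1), (1 - a j) = 1 - a i := by
    simp [Nat.Ico_succ_singleton]
  have e1 : ∀ l ∈ Finset.Ico (i + 1) k,
      ∏ j ∈ Finset.Ico i (l + 1), (1 - a j)
        = (1 - a i) * ∏ j ∈ Finset.Ico (i + 1) (l + 1), (1 - a j) := by
    intro l hl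
    exact Finset.prod_eq_prod_Ico_succ_bot
      (lt_of_lt_of_le (Nat.lt_succ_self i) (le_trans (Finset.mem_Ico.1 hl).1 (Nat.le_succ l))) _
  rw [Finset.sum_congr rfl e1, e0, ← Finset.mul_sum]
  ring

lemma Dv_top (k : ℕ) (a : ℕ → ℝ) : Dv k a k = 1 := by simp [Dv]

/-- **Solution of the Bellman equation for the (d,k)-RLL input-constrained BEC**
(core of Theorem 9 of the paper). With
`ρ_ε = (1−ε) · max_{a_d,…,a_{k−1} ∈ [0,1]} [Σ_{i=d}^{k−1} h_b(a_i) Π_{j=d}^{i−1}(1−a_j)]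
        / [d + 1 + Σ_{i=d}^{k−1} Π_{j=d}^{i}(1−a_j)]`,
there is a function `h : {0,…,k} → ℝ` with `ρ_ε + h(i) = h(i+1)` for `0 ≤ i ≤ d−1`,
`ρ_ε + h(i) = max_{a ∈ [0,1]} [(1−ε)h_b(a) + (1−a)h(i+1) + a·h(0)]` for
`d ≤ i ≤ k−1`, and `ρ_ε = h(0) − h(k)`. -/
theorem bellman_dk_BEC (d k : ℕ) (hdk : d < k) (ε : ℝ) (hε : ε ∈ Set.Icc (0 : ℝ) 1)
    (m ρ : ℝ)
    (hm : IsGreatest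
      ((fun a : ℕ → ℝ =>
          (∑ i ∈ Finset.Ico d k, binEnt (a i) * ∏ j ∈ Finset.Ico d i, (1 - a j)) /
            ((d : ℝ) + 1 + ∑ i ∈ Finset.Ico d k, ∏ j ∈ Finset.Ico d (i + 1), (1 - a j))) ''
        {a : ℕ → ℝ | ∀ i, a i ∈ Set.Icc (0 : ℝ) 1}) m)
    (hρ : ρ = (1 - ε) * m) :
    ∃ h : ℕ → ℝ,
      (∀ i < d, ρ + h i = h (i + 1)) ∧
      (∀ i, d ≤ i → i < k →
        IsGreatest
          ((fun a : ℝ => (1 - ε) * binEnt a + (1 - a) * h (i + 1) + a * h 0) ''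
            Set.Icc (0 : ℝ) 1)
          (ρ + h i)) ∧
      ρ = h 0 - h k := by
  obtain ⟨hε0, hε1⟩ := hε
  set c := 1 - ε with hcdef
  have hc : 0 ≤ c := by simp only [hcdef]; linarith
  -- the maximizing-point function for Fmax
  have hch : ∀ x : ℝ, ∃ b, b ∈ Set.Icc (0:ℝ) 1 ∧ c * binEnt b + (1 - b) * x = Fmax c x := by
    intro x
    obtain ⟨b, hb, hfb⟩ := (Fmax_isGreatest c x).1
    exact ⟨b, hb, hfb⟩
  choose g hg1 hg2 using hch
  -- the backward value sequence
  set H : ℕ → ℝ := fun n => Nat.rec (-ρ) (fun _ y => Fmax c y - ρ) n with hHdef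
  have H0 : H 0 = -ρ := rfl
  have Hs : ∀ n, H (n + 1) = Fmax c (H n) - ρ := fun n => rfl
  -- denominators are positive
  have prodnn : ∀ (a : ℕ → ℝ), (∀ j, a j ∈ Set.Icc (0:ℝ) 1) →
      ∀ s : Finset ℕ, (0:ℝ) ≤ ∏ j ∈ s, (1 - a j) := by
    intro a ha s
    exact Finset.prod_nonneg fun j _ => by have := (ha j).2; linarith
  have Dfull_pos : ∀ (a : ℕ → ℝ), (∀ j, a j ∈ Set.Icc (0:ℝ) 1) →
      (0:ℝ) < (d : ℝ) + 1 + ∑ i ∈ Finset.Ico d k, ∏ j ∈ Finset.Ico d (i + 1), (1 - a j) := by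
    intro a ha
    have h1 : (0:ℝ) ≤ ∑ i ∈ Finset.Ico d k, ∏ j ∈ Finset.Ico d (i + 1), (1 - a j) :=
      Finset.sum_nonneg fun i _ => prodnn a ha _
    have h2 : (0:ℝ) ≤ (d : ℝ) := Nat.cast_nonneg d
    linarith
  have Dsplit : ∀ (a : ℕ → ℝ),
      (d : ℝ) + 1 + ∑ i ∈ Finset.Ico d k, ∏ j ∈ Finset.Ico d (i + 1), (1 - a j)
        = (d : ℝ) + Dv k a d := by
    intro a; rw [Dv]; ring
  -- ratio bound from hm.2
  have ratio_le : ∀ (a : ℕ → ℝ), (∀ j, a j ∈ Set.Icc (0:ℝ) 1) →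
      Nv k a d ≤ m * ((d : ℝ) + Dv k a d) := by
    intro a ha
    have := hm.2 (Set.mem_image_of_mem _ (ha : a ∈ {a : ℕ → ℝ | ∀ i, a i ∈ Set.Icc (0:ℝ) 1}))
    rw [div_le_iff₀ (Dfull_pos a ha)] at this
    rw [Dsplit a] at this
    exact this
  have hρc : ρ = c * m := hρ
  -- lower bound: any feasible strategy gives a value ≤ H n
  have lower : ∀ n, n ≤ k - d → ∀ (a : ℕ → ℝ), (∀ j, a j ∈ Set.Icc (0:ℝ) 1) →
      c * Nv k a (k - n) - ρ * Dv k a (k - n) ≤ H n := by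
    intro n
    induction n with
    | zero =>
      intro _ a _
      simp [Nv_top, Dv_top, H0]
    | succ n ih =>
      intro hn a ha
      have hkn : k - (n + 1) < k := by omega
      have hsucc : k - (n + 1) + 1 = k - n := by omega
      have h1 : c * Nv k a (k - (n + 1) + 1) - ρ * Dv k a (k - (n + 1) + 1) ≤ H n := by
        rw [hsucc]; exact ih (by omega) a ha
      have h2 : (0:ℝ) ≤ 1 - a (k - (n + 1)) := by have := (ha (k - (n + 1))).2; linarith
      rw [Nv_rec k a hkn, Dv_rec k a hkn]
      have h3 : (1 - a (k - (n + 1))) * (c * Nv k a (k - (n + 1) + 1)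
          - ρ * Dv k a (k - (n + 1) + 1)) ≤ (1 - a (k - (n + 1))) * H n :=
        mul_le_mul_of_nonneg_left h1 h2
      have h4 : c * binEnt (a (k - (n + 1))) + (1 - a (k - (n + 1))) * H n ≤ Fmax c (H n) :=
        (Fmax_isGreatest c (H n)).2 ⟨a (k - (n + 1)), ha (k - (n + 1)), rfl⟩
      rw [Hs n]
      nlinarith [h3, h4]
  -- the optimal strategy
  set b : ℕ → ℝ := fun i => g (H (k - i - 1)) with hbdef
  have hb : ∀ j, b j ∈ Set.Icc (0:ℝ) 1 := fun j => hg1 _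
  have eqchain : ∀ n, n ≤ k - d → H n = c * Nv k b (k - n) - ρ * Dv k b (k - n) := by
    intro n
    induction n with
    | zero => intro _; simp [Nv_top, Dv_top, H0]
    | succ n ih =>
      intro hn
      have hkn : k - (n + 1) < k := by omega
      have hsucc : k - (n + 1) + 1 = k - n := by omega
      have hbi : b (k - (n + 1)) = g (H n) := by
        have : k - (n + 1) + 1 - 1 = k - (n+1) := rfl
        simp only [hbdef]
        congr 2
        omega
      have ihe := ih (by omega)
      rw [Nv_rec k b hkn, Dv_rec k b hkn, hsucc, Hs n, ← hg2 (H n), hbi, ihe]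
      ring
  -- key identity
  have hkd1 : k - (k - d) = d := by omega
  have key1 : H (k - d) ≤ (d : ℝ) * ρ := by
    rw [eqchain (k - d) le_rfl, hkd1]
    have h1 : Nv k b d ≤ m * ((d : ℝ) + Dv k b d) := ratio_le b hb
    have h2 : c * Nv k b d ≤ c * (m * ((d : ℝ) + Dv k b d)) := mul_le_mul_of_nonneg_left h1 hc
    rw [hρc]
    nlinarith [h2]
  have key2 : (d : ℝ) * ρ ≤ H (k - d) := by
    obtain ⟨a, ha, hval⟩ := hm.1
    have ha' : ∀ j, a j ∈ Set.Icc (0:ℝ) 1 := ha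
    have hlow := lower (k - d) le_rfl a ha'
    rw [hkd1] at hlow
    have heq : Nv k a d = m * ((d : ℝ) + Dv k a d) := by
      have := hval
      simp only at this
      rw [div_eq_iff (ne_of_gt (Dfull_pos a ha'))] at this
      rw [Dsplit a] at this
      exact this
    have : c * Nv k a d - ρ * Dv k a d = (d : ℝ) * ρ := by
      rw [heq, hρc]; ring
    linarith [hlow, this.ge]
  have key : H (k - d) = (d : ℝ) * ρ := le_antisymm key1 key2
  -- the potential function
  refine ⟨fun i => if i ≤ d then (i : ℝ) * ρ else H (k - i), ?_, ?_, ?_⟩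
  · intro i hi
    have h1 : i ≤ d := le_of_lt hi
    have h2 : i + 1 ≤ d := hi
    simp only [if_pos h1, if_pos h2]
    push_cast
    ring
  · intro i hid hik
    have hi1 : ¬ (i + 1 ≤ d) := by omega
    have h0 : (if 0 ≤ d then ((0:ℕ) : ℝ) * ρ else H (k - 0)) = 0 := by
      simp
    have hhi : (if i ≤ d then (i : ℝ) * ρ else H (k - i)) = H (k - i) := by
      by_cases hd : i ≤ d
      · have hid' : i = d := le_antisymm hd hid
        rw [if_pos hd, hid', ← key]
      · rw [if_neg hd]
    have hhi1 : (if i + 1 ≤ d then ((i+1 : ℕ) : ℝ) * ρ else H (k - (i+1))) = H (k - (i+1)) :=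
      if_neg hi1
    have hk2 : k - i = (k - (i + 1)) + 1 := by omega
    simp only [h0, hhi, hhi1]
    have hval : ρ + H (k - i) = Fmax c (H (k - (i + 1))) := by
      rw [hk2, Hs]; ring
    have hfun : (fun a : ℝ => (1 - ε) * binEnt a + (1 - a) * H (k - (i + 1)) + a * 0)
        = fun a : ℝ => c * binEnt a + (1 - a) * H (k - (i + 1)) := by
      funext a; rw [hcdef]; ring
    rw [hval, hfun]
    exact Fmax_isGreatest c (H (k - (i + 1)))
  · have hk0 : ¬ (k ≤ d) := by omega
    simp only [if_neg hk0, Nat.le_zero, Nat.sub_self]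
    rw [if_pos (Nat.zero_le d), H0]
    push_cast
    ring
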